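/- Let K : [0,∞) → [0,∞) be nonnegative, non-increasing, and not integrable on (0,∞), i.e. ∫₀^∞ K(s) ds = +∞. Then the function f(Δ) := ∫₀^∞ K(s)K(s+Δ) ds (with values in [0,∞]) satisfies ∫₀^∞ f(Δ) dΔ = +∞. -/

import Mathlib

open MeasureTheory Filter Set

/-- Key deterministic lemma underlying Theorem 5.3(b): if `K ≥ 0` is non-increasing on
`[0,∞)` and `∫₀^∞ K(s) ds = +∞`, then `f(Δ) = ∫₀^∞ K(s)K(s+Δ) ds` (with values in `[0,∞]`)
satisfies `∫₀^∞ f(Δ) dΔ = +∞`. -/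
theorem blackScholesLongMemory_nonintegrable_autocov
    (K : ℝ → ℝ) (hKnonneg : ∀ s ≥ (0:ℝ), 0 ≤ K s)
    (hKmono : AntitoneOn K (Ici 0))
    (hKdiv : ∫⁻ s in Ioi (0:ℝ), ENNReal.ofReal (K s) = ⊤) :
    ∫⁻ Δ in Ioi (0:ℝ), (∫⁻ s in Ioi (0:ℝ), ENNReal.ofReal (K s * K (s + Δ))) = ⊤ := by
  -- measurable antitone modification
  set g : ℝ → ℝ := fun x => K (max x 0) with hg_def
  have hg_anti : Antitone g := fun x y hxy =>
    hKmono (mem_Ici.2 (le_max_right x 0)) (mem_Ici.2 (le_max_right y 0))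
      (max_le_max hxy le_rfl)
  have hg_meas : Measurable g := hg_anti.measurable
  have hg_nonneg : ∀ x, 0 ≤ g x := fun x => hKnonneg _ (le_max_right x 0)
  have hg_eq : ∀ x : ℝ, 0 ≤ x → g x = K x := fun x hx => by
    simp [hg_def, max_eq_left hx]
  -- div for g
  have hgdiv : ∫⁻ s in Ioi (0:ℝ), ENNReal.ofReal (g s) = ⊤ := by
    rw [setLIntegral_congr_fun measurableSet_Ioi
      (fun s hs => by rw [hg_eq s hs.le])]
    exact hKdiv
  -- tails diverge
  have htail : ∀ a : ℝ, 0 ≤ a → ∫⁻ t in Ioi a, ENNReal.ofReal (g t) = ⊤ := by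
    intro a ha
    have hsplit : Ioi (0:ℝ) = Ioc 0 a ∪ Ioi a := (Ioc_union_Ioi_eq_Ioi ha).symm
    have hdisj : Disjoint (Ioc (0:ℝ) a) (Ioi a) := Ioc_disjoint_Ioi le_rfl
    have hu : (∫⁻ t in Ioc (0:ℝ) a, ENNReal.ofReal (g t))
        + ∫⁻ t in Ioi a, ENNReal.ofReal (g t) = ⊤ := by
      rw [← lintegral_union measurableSet_Ioi hdisj, ← hsplit]
      exact hgdiv
    have hfin : ∫⁻ t in Ioc (0:ℝ) a, ENNReal.ofReal (g t) ≠ ⊤ := by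
      have hb : ∫⁻ t in Ioc (0:ℝ) a, ENNReal.ofReal (g t)
          ≤ ∫⁻ _ in Ioc (0:ℝ) a, ENNReal.ofReal (g 0) := by
        refine setLIntegral_mono' measurableSet_Ioc fun t ht => ?_
        exact ENNReal.ofReal_le_ofReal (hg_anti ht.1.le)
      refine ne_top_of_le_ne_top ?_ hb
      rw [setLIntegral_const]
      exact ENNReal.mul_ne_top ENNReal.ofReal_ne_top measure_Ioc_lt_top.ne
    by_contra h
    exact (ENNReal.add_ne_top.2 ⟨hfin, h⟩) hu
  -- positivity
  have hg_pos : ∀ x, 0 < g x := by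
    intro x
    rcases lt_or_eq_of_le (hg_nonneg x) with h | h
    · exact h
    · exfalso
      set a := max x 0 with ha
      have haa : (0:ℝ) ≤ a := le_max_right _ _
      have hz : ∫⁻ t in Ioi a, ENNReal.ofReal (g t) = 0 := by
        rw [setLIntegral_congr_fun measurableSet_Ioi
          (fun t (ht : t ∈ Ioi a) => ?_), lintegral_zero]
        have : g t ≤ g x := by
          have : g t ≤ g a := hg_anti (le_of_lt ht)
          have hgx : g a = g x := by simp [hg_def, ha, max_assoc]
          rw [hgx] at this; exact this
        rw [← h] at this
        simp [ENNReal.ofReal_eq_zero, le_antisymm this (hg_nonneg t)]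
      rw [htail a haa] at hz
      exact ENNReal.top_ne_zero hz
  -- replace K by g in the goal
  have hcongr : ∫⁻ Δ in Ioi (0:ℝ), (∫⁻ s in Ioi (0:ℝ), ENNReal.ofReal (K s * K (s + Δ)))
      = ∫⁻ Δ in Ioi (0:ℝ), (∫⁻ s in Ioi (0:ℝ), ENNReal.ofReal (g s * g (s + Δ))) := by
    refine setLIntegral_congr_fun measurableSet_Ioi
      (fun Δ hΔ => ?_)
    refine setLIntegral_congr_fun measurableSet_Ioi
      (fun s hs => ?_)
    rw [hg_eq s hs.le, hg_eq (s + Δ) (add_pos hs hΔ).le]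
  rw [hcongr]
  -- Tonelli swap
  have hmeas : Measurable fun p : ℝ × ℝ => ENNReal.ofReal (g p.2 * g (p.2 + p.1)) :=
    ENNReal.measurable_ofReal.comp
      ((hg_meas.comp measurable_snd).mul (hg_meas.comp (measurable_snd.add measurable_fst)))
  rw [lintegral_lintegral_swap hmeas.aemeasurable]
  -- inner integral is ⊤ for each s > 0
  have hinner : ∀ s : ℝ, s ∈ Ioi (0:ℝ) →
      ∫⁻ Δ in Ioi (0:ℝ), ENNReal.ofReal (g s * g (s + Δ)) = ⊤ := by
    intro s hs
    have h1 : ∀ Δ : ℝ, ENNReal.ofReal (g s * g (s + Δ))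
        = ENNReal.ofReal (g s) * ENNReal.ofReal (g (s + Δ)) := fun Δ =>
      ENNReal.ofReal_mul (hg_nonneg s)
    simp_rw [h1]
    rw [lintegral_const_mul' _ _ ENNReal.ofReal_ne_top]
    have hshift : ∫⁻ Δ in Ioi (0:ℝ), ENNReal.ofReal (g (s + Δ)) =
        ∫⁻ t in Ioi s, ENNReal.ofReal (g t) := by
      have hpre : (fun x : ℝ => s + x) ⁻¹' Ioi s = Ioi 0 := by
        ext x; simp [mem_Ioi]
      have := (measurePreserving_add_left (volume : Measure ℝ) s).setLIntegral_comp_preimage_emb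
        (measurableEmbedding_addLeft s) (fun t => ENNReal.ofReal (g t)) (Ioi s)
      rw [hpre] at this
      exact this
    rw [hshift, htail s hs.le]
    exact ENNReal.mul_top (ENNReal.ofReal_pos.mpr (hg_pos s)).ne'
  rw [setLIntegral_congr_fun measurableSet_Ioi hinner,
    setLIntegral_const]
  rw [ENNReal.top_mul]
  simp [Real.volume_Ioi]
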